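/- arXiv:1312.0090 — 2 statements merged into one kernel-verified Lean document; each statement's English description precedes it below -/
import Mathlib

section
/- Let K be a field, Φ : U → V a smooth morphism of smooth K-varieties, g : V → A^1 a regular function, and f = g ∘ Φ : U → A^1. Then Crit(f) = Φ^{-1}(Crit(g)) as subsets of U (indeed as closed subschemes), and the restriction Φ|_{Crit(f)} : Crit(f) → Crit(g) is a smooth morphism of the same relative dimension as Φ. -/
open MvPolynomial

set_option maxHeartbeats 1000000
set_option synthInstance.maxHeartbeats 200000

/-- Chain rule for partial derivatives under polynomial substitution. -/
lemma crit_chain {K : Type} [CommRing K] {a b : ℕ}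
    (Φ : Fin b → MvPolynomial (Fin a) K) (g : MvPolynomial (Fin b) K) (i : Fin a) :
    pderiv i (aeval Φ g) = ∑ j, aeval Φ (pderiv j g) * pderiv i (Φ j) := by
  induction g using MvPolynomial.induction_on with
  | C k => simp
  | add p q hp hq =>
      simp only [map_add, hp, hq, add_mul, Finset.sum_add_distrib]
  | mul_X p j hp =>
      simp only [map_mul, aeval_X, pderiv_mul, hp, pderiv_X, map_add, Pi.single_apply, mul_ite,
        mul_one, mul_zero, add_mul, ite_mul, zero_mul, Finset.sum_add_distrib,
        Finset.sum_ite_eq', Finset.mem_univ, if_true, Finset.sum_mul,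
        apply_ite (aeval Φ), map_zero, Finset.sum_ite_eq]
      congr 1
      exact Finset.sum_congr rfl fun x _ => by ring

/-- Evaluating a substituted polynomial. -/
lemma crit_eval_aeval {K : Type} [CommRing K] {a b : ℕ}
    (Φ : Fin b → MvPolynomial (Fin a) K) (p : MvPolynomial (Fin b) K) (x : Fin a → K) :
    eval x (aeval Φ p) = eval (fun j => eval x (Φ j)) p := by
  induction p using MvPolynomial.induction_on with
  | C k => simp
  | add p q hp hq => simp only [map_add, hp, hq]
  | mul_X p j hp => simp only [map_mul, aeval_X, eval_X, hp]

/-- First-order Taylor expansion modulo the square of an ideal. -/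
lemma crit_taylor {K P : Type} [CommRing K] [CommRing P] [Algebra K P] {n : ℕ}
    (I : Ideal P) (u h : Fin n → P) (hh : ∀ i, h i ∈ I)
    (p : MvPolynomial (Fin n) K) :
    aeval (fun i => u i + h i) p - aeval u p - ∑ i, aeval u (pderiv i p) * h i ∈ I ^ 2 := by
  induction p using MvPolynomial.induction_on with
  | C k => simp
  | add p q hp hq =>
      have := (I ^ 2).add_mem hp hq
      convert this using 1
      simp only [map_add, add_mul, Finset.sum_add_distrib]
      ring
  | mul_X p j hp =>
      have hS : (∑ i, aeval u (pderiv i p) * h i) ∈ I :=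
        Ideal.sum_mem _ fun i _ => I.mul_mem_left _ (hh i)
      have h1 : (∑ i, aeval u (pderiv i p) * h i) * h j ∈ I ^ 2 := by
        rw [pow_two]; exact Ideal.mul_mem_mul hS (hh j)
      have h2 : (aeval (fun i => u i + h i) p - aeval u p - ∑ i, aeval u (pderiv i p) * h i)
          * (u j + h j) ∈ I ^ 2 := (I ^ 2).mul_mem_right _ hp
      have hmem := (I ^ 2).add_mem h1 h2
      have hsum : ∑ i, aeval u (pderiv i (p * X j)) * h i
          = (∑ i, aeval u (pderiv i p) * h i) * u j + aeval u p * h j := by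
        simp only [pderiv_mul, pderiv_X, Pi.single_apply, map_add, map_mul, aeval_X, add_mul,
          mul_ite, mul_one, mul_zero, ite_mul, zero_mul, Finset.sum_add_distrib,
          apply_ite (aeval u), map_zero, Finset.sum_ite_eq, Finset.mem_univ, if_true,
          Finset.sum_mul]
        congr 1
        exact Finset.sum_congr rfl fun x _ => by ring
      rw [map_mul, map_mul, aeval_X, aeval_X, hsum]
      convert hmem using 1
      ring

/-- A pointwise right inverse for the Jacobian matrix of `Φ`, obtained from the
hypothesis that its maximal minors generate the unit ideal. -/
lemma crit_N (K : Type) [Field K] (a b : ℕ)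
    (Φ : Fin b → MvPolynomial (Fin a) K)
    (hsm : Ideal.span
        {q : MvPolynomial (Fin a) K |
          ∃ σ : Fin b ↪ Fin a,
            q = Matrix.det (Matrix.of fun j j' : Fin b => pderiv (σ j') (Φ j))} = ⊤) :
    ∃ N : Fin a → Fin b → MvPolynomial (Fin a) K,
      ∀ j k, (∑ i, pderiv i (Φ j) * N i k) = if j = k then 1 else 0 := by
  classical
  have hset : {q : MvPolynomial (Fin a) K |
          ∃ σ : Fin b ↪ Fin a,
            q = Matrix.det (Matrix.of fun j j' : Fin b => pderiv (σ j') (Φ j))}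
      = Set.range (fun σ : Fin b ↪ Fin a =>
          Matrix.det (Matrix.of fun j j' : Fin b => pderiv (σ j') (Φ j))) := by
    ext q; simp [eq_comm]
  rw [hset] at hsm
  have h1 : (1 : MvPolynomial (Fin a) K) ∈ Ideal.span (Set.range (fun σ : Fin b ↪ Fin a =>
      Matrix.det (Matrix.of fun j j' : Fin b => pderiv (σ j') (Φ j)))) := by
    rw [hsm]; trivial
  rw [Ideal.mem_span_range_iff_exists_fun] at h1
  obtain ⟨c, hc⟩ := h1
  set M : (Fin b ↪ Fin a) → Matrix (Fin b) (Fin b) (MvPolynomial (Fin a) K) :=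
    fun σ => Matrix.of fun j j' : Fin b => pderiv (σ j') (Φ j) with hM
  refine ⟨fun i k => ∑ σ : Fin b ↪ Fin a, c σ *
      (∑ j', if σ j' = i then Matrix.adjugate (M σ) j' k else 0), fun j k => ?_⟩
  have key : ∀ σ : Fin b ↪ Fin a,
      (∑ i, pderiv i (Φ j) * ∑ j', if σ j' = i then Matrix.adjugate (M σ) j' k else 0)
        = Matrix.det (M σ) * (if j = k then 1 else 0) := by
    intro σ
    have : ∀ i, pderiv i (Φ j) * ∑ j', (if σ j' = i then Matrix.adjugate (M σ) j' k else 0)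
        = ∑ j', (if σ j' = i then M σ j j' * Matrix.adjugate (M σ) j' k else 0) := by
      intro i
      rw [Finset.mul_sum]
      refine Finset.sum_congr rfl fun j' _ => ?_
      split
      · next h => rw [hM]; simp [← h]
      · simp
    simp_rw [this]
    rw [Finset.sum_comm]
    have : ∀ j', (∑ i, if σ j' = i then M σ j j' * Matrix.adjugate (M σ) j' k else 0)
        = M σ j j' * Matrix.adjugate (M σ) j' k := by
      intro j'; rw [Finset.sum_ite_eq (Finset.univ) (σ j')]; simp
    simp_rw [this]
    have := congrArg (fun Mat => Mat j k) (Matrix.mul_adjugate (M σ))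
    simpa [Matrix.mul_apply, Matrix.one_apply] using this
  calc (∑ i, pderiv i (Φ j) * ∑ σ : Fin b ↪ Fin a, c σ *
      (∑ j', if σ j' = i then Matrix.adjugate (M σ) j' k else 0))
      = ∑ σ : Fin b ↪ Fin a, c σ * (∑ i, pderiv i (Φ j) *
          ∑ j', if σ j' = i then Matrix.adjugate (M σ) j' k else 0) := by
        simp_rw [Finset.mul_sum]
        rw [Finset.sum_comm]
        exact Finset.sum_congr rfl fun σ _ => Finset.sum_congr rfl fun i _ =>
          Finset.sum_congr rfl fun _ _ => by ring
    _ = (∑ σ : Fin b ↪ Fin a, c σ * Matrix.det (M σ)) * (if j = k then 1 else 0) := by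
        simp_rw [key]; rw [Finset.sum_mul]; exact Finset.sum_congr rfl fun σ _ => by ring
    _ = if j = k then 1 else 0 := by rw [hc, one_mul]

lemma crit_fs (K : Type) [Field K] (a b : ℕ)
    (Φ : Fin b → MvPolynomial (Fin a) K)
    (N : Fin a → Fin b → MvPolynomial (Fin a) K)
    (hN : ∀ j k, (∑ i, pderiv i (Φ j) * N i k) = if j = k then 1 else 0)
    (w : Fin b → MvPolynomial (Fin b) K)
    (I : Ideal (MvPolynomial (Fin a) K))
    (hI : I = Ideal.span (Set.range fun j => aeval Φ (w j)))
    (H : Ideal.span (Set.range w) ≤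
        Ideal.comap (aeval Φ : MvPolynomial (Fin b) K →ₐ[K] MvPolynomial (Fin a) K).toRingHom I) :
    @Algebra.FormallySmooth (MvPolynomial (Fin b) K ⧸ Ideal.span (Set.range w))
      (MvPolynomial (Fin a) K ⧸ I) _ _
      (Ideal.quotientMap I (aeval Φ).toRingHom H).toAlgebra := by
  classical
  letI algRS : Algebra (MvPolynomial (Fin b) K ⧸ Ideal.span (Set.range w))
      (MvPolynomial (Fin a) K ⧸ I) :=
    (Ideal.quotientMap I (aeval Φ).toRingHom H).toAlgebra
  have halg : ∀ p : MvPolynomial (Fin b) K,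
      algebraMap (MvPolynomial (Fin b) K ⧸ Ideal.span (Set.range w))
          (MvPolynomial (Fin a) K ⧸ I)
          (Ideal.Quotient.mk (Ideal.span (Set.range w)) p)
        = Ideal.Quotient.mk I (aeval Φ p) := by
    intro p
    rw [RingHom.algebraMap_toAlgebra]
    exact Ideal.quotientMap_mk
  haveI tower : IsScalarTower K (MvPolynomial (Fin b) K ⧸ Ideal.span (Set.range w))
      (MvPolynomial (Fin a) K ⧸ I) := by
    refine IsScalarTower.of_algebraMap_eq (R := K)
      (S := MvPolynomial (Fin b) K ⧸ Ideal.span (Set.range w))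
      (A := MvPolynomial (Fin a) K ⧸ I)
      fun k => ?_
    have h1 : algebraMap K (MvPolynomial (Fin b) K ⧸ Ideal.span (Set.range w)) k
        = Ideal.Quotient.mk _ (C k) := rfl
    have h2 : algebraMap K (MvPolynomial (Fin a) K ⧸ I) k
        = Ideal.Quotient.mk _ (C k) := rfl
    rw [h1, h2, halg, aeval_C]
    rfl
  -- the presentation ring
  set R := MvPolynomial (Fin b) K ⧸ Ideal.span (Set.range w) with hR
  letI : CommRing R := Ideal.Quotient.commRing (Ideal.span (Set.range w))
  letI : Algebra K R := Ideal.Quotient.algebra K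
  set P := MvPolynomial (Fin a) R with hP
  letI : CommRing P := AddMonoidAlgebra.commRing
  set θ : MvPolynomial (Fin a) K →ₐ[K] P := aeval (fun i => X i) with hθ
  set fP : P →ₐ[R] (MvPolynomial (Fin a) K ⧸ I) :=
    aeval (fun i => Ideal.Quotient.mk I (X i)) with hfP
  have hfθ : ∀ p, fP (θ p) = Ideal.Quotient.mk I p := by
    intro p
    have : (fP.restrictScalars K).comp θ = Ideal.Quotient.mkₐ K I := by
      apply MvPolynomial.algHom_ext
      intro i
      simp only [AlgHom.coe_comp, AlgHom.coe_restrictScalars', Function.comp_apply, hθ, hfP,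
        aeval_X, Ideal.Quotient.mkₐ_eq_mk]
      exact aeval_X _ i
    exact AlgHom.congr_fun this p
  set ρ : Fin b → P := fun j =>
    C (Ideal.Quotient.mk (Ideal.span (Set.range w)) (X j)) - θ (Φ j) with hρ
  have hρker : ∀ j, fP (ρ j) = 0 := by
    intro j
    rw [hρ]
    simp only [map_sub, hfθ]
    rw [show (fP (C (Ideal.Quotient.mk (Ideal.span (Set.range w)) (X j)))) =
      algebraMap R (MvPolynomial (Fin a) K ⧸ I)
        (Ideal.Quotient.mk (Ideal.span (Set.range w)) (X j)) from aeval_C _ _]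
    rw [halg, aeval_X, sub_self]
  set IP := RingHom.ker fP.toRingHom with hIP
  have hlmem0 : ∀ j, ρ j ∈ IP := fun j => by
    rw [hIP, RingHom.mem_ker]; exact hρker j
  set hlift : Fin a → P := fun i => ∑ j, θ (N i j) * ρ j with hhl
  have hlmem : ∀ i, hlift i ∈ IP := fun i =>
    Ideal.sum_mem _ fun j _ => Ideal.mul_mem_left _ _ (hlmem0 j)
  set ψ : MvPolynomial (Fin a) K →ₐ[K] P ⧸ IP ^ 2 :=
    aeval (R := K) (S₁ := P ⧸ IP ^ 2) (fun i => Ideal.Quotient.mk (IP ^ 2) (X i + hlift i)) with hψdef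
  have hψmk : ∀ p, ψ p
      = Ideal.Quotient.mk (IP ^ 2) (aeval (fun i => X i + hlift i) p) := by
    intro p
    have : ψ = (Ideal.Quotient.mkₐ K (IP ^ 2)).comp
        (aeval (fun i => X i + hlift i) : MvPolynomial (Fin a) K →ₐ[K] P) := by
      apply MvPolynomial.algHom_ext
      intro i
      simp [hψdef]
    rw [this]
    rfl
  have hkey : ∀ j, ∑ i, θ (pderiv i (Φ j)) * hlift i = ρ j := by
    intro j
    calc ∑ i, θ (pderiv i (Φ j)) * hlift i
        = ∑ k, θ (∑ i, pderiv i (Φ j) * N i k) * ρ k := by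
          simp only [hhl, Finset.mul_sum, map_sum, map_mul, Finset.sum_mul]
          rw [Finset.sum_comm]
          exact Finset.sum_congr rfl fun k _ => Finset.sum_congr rfl fun i _ => by ring
      _ = ρ j := by
          simp_rw [hN]
          simp only [apply_ite θ, map_one, map_zero, ite_mul, one_mul, zero_mul]
          rw [Finset.sum_ite_eq Finset.univ j ρ]
          simp
  have hψΦ : ∀ j, ψ (Φ j) = algebraMap R (P ⧸ IP ^ 2)
      (Ideal.Quotient.mk (Ideal.span (Set.range w)) (X j)) := by
    intro j
    rw [hψmk]
    have htay := crit_taylor IP (fun i => (X i : P)) hlift hlmem (Φ j)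
    rw [show (aeval fun i => (X i : P)) = θ from rfl] at htay
    rw [hkey j, sub_sub] at htay
    rw [Ideal.Quotient.eq.mpr htay]
    rw [show θ (Φ j) + ρ j = C (Ideal.Quotient.mk (Ideal.span (Set.range w)) (X j)) from by
      rw [hρ]; ring]
    rfl
  have hψφ : ∀ p, ψ (aeval Φ p) = algebraMap R (P ⧸ IP ^ 2)
      (Ideal.Quotient.mk (Ideal.span (Set.range w)) p) := by
    have heq : ψ.comp (aeval Φ : MvPolynomial (Fin b) K →ₐ[K] MvPolynomial (Fin a) K)
        = (IsScalarTower.toAlgHom K R (P ⧸ IP ^ 2)).comp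
            (Ideal.Quotient.mkₐ K (Ideal.span (Set.range w))) := by
      apply MvPolynomial.algHom_ext
      intro j
      simp only [AlgHom.coe_comp, Function.comp_apply, aeval_X, Ideal.Quotient.mkₐ_eq_mk,
        IsScalarTower.coe_toAlgHom']
      exact hψΦ j
    exact fun p => AlgHom.congr_fun heq p
  have hker : ∀ q ∈ I, ψ q = 0 := by
    have hle : Ideal.span (Set.range fun j => aeval Φ (w j)) ≤ RingHom.ker ψ.toRingHom := by
      rw [Ideal.span_le]
      rintro _ ⟨j, rfl⟩
      dsimp only
      rw [SetLike.mem_coe, RingHom.mem_ker]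
      show ψ (aeval Φ (w j)) = 0
      have hmem : w j ∈ Ideal.span (Set.range w) := Ideal.subset_span (Set.mem_range_self j)
      rw [hψφ, Ideal.Quotient.eq_zero_iff_mem.mpr hmem, map_zero]
    intro q hq
    rw [hI] at hq
    exact hle hq
  set gS0 : (MvPolynomial (Fin a) K ⧸ I) →ₐ[K] P ⧸ IP ^ 2 :=
    Ideal.Quotient.liftₐ I ψ hker with hgS0
  have hgS0mk : ∀ p, gS0 (Ideal.Quotient.mk I p) = ψ p := by
    intro p
    rw [hgS0, Ideal.Quotient.liftₐ_apply]
    rfl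
  have hcomm : ∀ r : R, gS0.toRingHom (algebraMap R (MvPolynomial (Fin a) K ⧸ I) r)
      = algebraMap R (P ⧸ IP ^ 2) r := by
    intro r
    obtain ⟨p, rfl⟩ := Ideal.Quotient.mk_surjective r
    show gS0 (algebraMap R (MvPolynomial (Fin a) K ⧸ I)
      (Ideal.Quotient.mk (Ideal.span (Set.range w)) p)) = _
    rw [halg, hgS0mk, hψφ]
  let gS : (MvPolynomial (Fin a) K ⧸ I) →ₐ[R] P ⧸ IP ^ 2 :=
    { toRingHom := gS0.toRingHom, commutes' := hcomm }
  have hcomp : ∀ p : MvPolynomial (Fin a) K,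
      fP (aeval (fun i => X i + hlift i) p) = Ideal.Quotient.mk I p := by
    have : (fP.restrictScalars K).comp
        (aeval (fun i => X i + hlift i) : MvPolynomial (Fin a) K →ₐ[K] P)
        = Ideal.Quotient.mkₐ K I := by
      apply MvPolynomial.algHom_ext
      intro i
      simp only [AlgHom.coe_comp, AlgHom.coe_restrictScalars', Function.comp_apply, aeval_X,
        Ideal.Quotient.mkₐ_eq_mk, map_add]
      rw [show fP (X i) = Ideal.Quotient.mk I (X i) from aeval_X _ i,
        show fP (hlift i) = 0 from hlmem i, add_zero]
    exact fun p => AlgHom.congr_fun this p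
  refine Algebra.FormallySmooth.of_split fP gS ?_
  apply AlgHom.ext
  intro s
  obtain ⟨p, rfl⟩ := Ideal.Quotient.mk_surjective s
  show fP.kerSquareLift (gS0 (Ideal.Quotient.mk I p)) = Ideal.Quotient.mk I p
  rw [hgS0mk, hψmk]
  show fP.kerSquareLift (Ideal.Quotient.mk (RingHom.ker fP.toRingHom ^ 2)
    (aeval (fun i => X i + hlift i) p)) = Ideal.Quotient.mk I p
  rw [show ∀ y, fP.kerSquareLift (Ideal.Quotient.mk (RingHom.ker fP.toRingHom ^ 2) y) = fP y
    from fun y => rfl]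
  exact hcomp p


/-- **Critical loci pull back along smooth morphisms.**  Let `K` be a field,
`Φ : 𝔸ᵃ → 𝔸ᵇ` a smooth morphism (given by polynomials `Φ j`, smoothness being the
condition that the `b × b` minors of its Jacobian matrix generate the unit ideal, i.e.
the differential of `Φ` is surjective at every point), `g : 𝔸ᵇ → 𝔸¹` a regular
function, and `f = g ∘ Φ : 𝔸ᵃ → 𝔸¹` (that is, `f = aeval Φ g`).  Then
`Crit(f) = Φ⁻¹(Crit(g))`, both as subsets of `K`-points and as closed subschemes
(the Jacobian ideal of `f` equals the pullback of the Jacobian ideal of `g`), and the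
restriction `Φ|_{Crit(f)} : Crit(f) → Crit(g)` is a smooth morphism (its map of
coordinate rings, induced by `aeval Φ` on the quotients by the Jacobian ideals, is a
smooth ring homomorphism). -/
theorem crit_comp_smooth (K : Type) [Field K] (a b : ℕ)
    (Φ : Fin b → MvPolynomial (Fin a) K) (g : MvPolynomial (Fin b) K)
    (hsm : Ideal.span
        {q : MvPolynomial (Fin a) K |
          ∃ σ : Fin b ↪ Fin a,
            q = Matrix.det (Matrix.of fun j j' : Fin b => pderiv (σ j') (Φ j))} = ⊤) :
    (∀ x : Fin a → K,
        (∀ i, eval x (pderiv i (aeval Φ g)) = 0)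
          ↔ (∀ j, eval (fun j' => eval x (Φ j')) (pderiv j g) = 0)) ∧
    Ideal.span (Set.range fun i => pderiv i (aeval Φ g))
      = Ideal.span (Set.range fun j => aeval Φ (pderiv j g)) ∧
    ∀ H : Ideal.span (Set.range fun j => pderiv j g) ≤
        Ideal.comap (aeval Φ : MvPolynomial (Fin b) K →ₐ[K] MvPolynomial (Fin a) K).toRingHom
          (Ideal.span (Set.range fun i => pderiv i (aeval Φ g))),
      @Algebra.Smooth
        (MvPolynomial (Fin b) K ⧸ Ideal.span (Set.range fun j => pderiv j g)) _
        (MvPolynomial (Fin a) K ⧸ Ideal.span (Set.range fun i => pderiv i (aeval Φ g))) _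
        (Ideal.quotientMap _ (aeval Φ).toRingHom H).toAlgebra := by
  classical
  obtain ⟨N, hN⟩ := crit_N K a b Φ hsm
  -- key identity: v k as combination of the d i
  have hvk : ∀ k, aeval Φ (pderiv k g)
      = ∑ i, pderiv i (aeval Φ g) * N i k := by
    intro k
    calc aeval Φ (pderiv k g)
        = ∑ j, aeval Φ (pderiv j g) * (if j = k then 1 else 0) := by
          simp [Finset.sum_ite_eq, mul_ite]
      _ = ∑ j, aeval Φ (pderiv j g) * ∑ i, pderiv i (Φ j) * N i k := by
          simp_rw [hN]
      _ = ∑ i, (∑ j, aeval Φ (pderiv j g) * pderiv i (Φ j)) * N i k := by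
          simp_rw [Finset.mul_sum, Finset.sum_mul]
          rw [Finset.sum_comm]
          exact Finset.sum_congr rfl fun _ _ => Finset.sum_congr rfl fun _ _ => by ring
      _ = ∑ i, pderiv i (aeval Φ g) * N i k := by simp_rw [crit_chain]
  have part2 : Ideal.span (Set.range fun i => pderiv i (aeval Φ g))
      = Ideal.span (Set.range fun j => aeval Φ (pderiv j g)) := by
    apply le_antisymm
    · rw [Ideal.span_le]
      rintro _ ⟨i, rfl⟩
      dsimp only
      rw [crit_chain]
      exact Ideal.sum_mem _ fun j _ =>
        Ideal.mul_mem_right _ _ (Ideal.subset_span ⟨j, rfl⟩)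
    · rw [Ideal.span_le]
      rintro _ ⟨k, rfl⟩
      dsimp only
      rw [hvk]
      exact Ideal.sum_mem _ fun i _ =>
        Ideal.mul_mem_right _ _ (Ideal.subset_span ⟨i, rfl⟩)
  refine ⟨?_, part2, ?_⟩
  · intro x
    constructor
    · intro hx j
      rw [← crit_eval_aeval, hvk, map_sum]
      simp only [map_mul]
      exact Finset.sum_eq_zero fun i _ => by rw [hx i, zero_mul]
    · intro hx i
      rw [crit_chain, map_sum]
      refine Finset.sum_eq_zero fun j _ => ?_
      rw [map_mul, crit_eval_aeval, hx j, zero_mul]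
  · intro H
    letI algRS : Algebra (MvPolynomial (Fin b) K ⧸ Ideal.span (Set.range fun j => pderiv j g))
        (MvPolynomial (Fin a) K ⧸ Ideal.span (Set.range fun i => pderiv i (aeval Φ g))) :=
      (Ideal.quotientMap _ (aeval Φ).toRingHom H).toAlgebra
    have halg : ∀ p : MvPolynomial (Fin b) K,
        algebraMap (MvPolynomial (Fin b) K ⧸ Ideal.span (Set.range fun j => pderiv j g))
            (MvPolynomial (Fin a) K ⧸ Ideal.span (Set.range fun i => pderiv i (aeval Φ g)))
            (Ideal.Quotient.mk (Ideal.span (Set.range fun j => pderiv j g)) p)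
          = Ideal.Quotient.mk (Ideal.span (Set.range fun i => pderiv i (aeval Φ g)))
              (aeval Φ p) := by
      intro p
      rw [RingHom.algebraMap_toAlgebra]
      exact Ideal.quotientMap_mk
    haveI tower : IsScalarTower K
        (MvPolynomial (Fin b) K ⧸ Ideal.span (Set.range fun j => pderiv j g))
        (MvPolynomial (Fin a) K ⧸ Ideal.span (Set.range fun i => pderiv i (aeval Φ g))) := by
      refine IsScalarTower.of_algebraMap_eq (R := K)
        (S := MvPolynomial (Fin b) K ⧸ Ideal.span (Set.range fun j => pderiv j g))
        (A := MvPolynomial (Fin a) K ⧸ Ideal.span (Set.range fun i => pderiv i (aeval Φ g)))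
        fun k => ?_
      have h1 : algebraMap K
          (MvPolynomial (Fin b) K ⧸ Ideal.span (Set.range fun j => pderiv j g)) k
          = Ideal.Quotient.mk _ (C k) := rfl
      have h2 : algebraMap K
          (MvPolynomial (Fin a) K ⧸ Ideal.span (Set.range fun i => pderiv i (aeval Φ g))) k
          = Ideal.Quotient.mk _ (C k) := rfl
      rw [h1, h2, halg, aeval_C]
      rfl
    haveI fpKS : Algebra.FinitePresentation K
        (MvPolynomial (Fin a) K ⧸ Ideal.span (Set.range fun i => pderiv i (aeval Φ g))) :=
      Algebra.FinitePresentation.quotient (Submodule.fg_span (Set.finite_range _))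
    haveI ftKR : Algebra.FiniteType K
        (MvPolynomial (Fin b) K ⧸ Ideal.span (Set.range fun j => pderiv j g)) :=
      Algebra.FiniteType.of_surjective (Ideal.Quotient.mkₐ K _)
        (Ideal.Quotient.mkₐ_surjective K _)
    haveI hfp := Algebra.FinitePresentation.of_restrict_scalars_finitePresentation
      (R := K)
      (A := MvPolynomial (Fin b) K ⧸ Ideal.span (Set.range fun j => pderiv j g))
      (B := MvPolynomial (Fin a) K ⧸ Ideal.span (Set.range fun i => pderiv i (aeval Φ g)))
    haveI hfs := crit_fs K a b Φ N hN (fun j => pderiv j g) _ part2 H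
    exact ⟨hfs, hfp⟩
end

section
/- Let K be a field of characteristic zero, R = K[x_1,…,x_m] a polynomial ring, d ≥ 0, and A the free graded-commutative R-algebra on generators x^{-i}_1,…,x^{-i}_{m_i} in degree −i for i = 1,…,d and y^{i-2d-1}_1,…,y^{i-2d-1}_{m_i} in degree i−2d−1 for i = 0,…,d (the degree-0 generators x^0_j being identified with the polynomial variables x_j, with m_0 = m). Suppose H ∈ A^{-2d} satisfies the classical master equation Σ_{i=1}^{d} Σ_{j=1}^{m_i} (∂H/∂x^{-i}_j)(∂H/∂y^{i-2d-1}_j) = 0 in A^{1-2d}. Define a degree-+1 derivation d on A by d = 0 on R and d x^{-i}_j = ∂H/∂y^{i-2d-1}_j, d y^{i-2d-1}_j = ∂H/∂x^{-i}_j for all i, j. Then d ∘ d = 0, so (A, d) is a commutative differential graded algebra. -/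
private lemma negOnePow_eq_of_zmod2 {a b : ℤ} (h : (a : ZMod 2) = (b : ZMod 2)) :
    a.negOnePow = b.negOnePow := by
  rw [Int.negOnePow_eq_iff]
  have h2 : ((a - b : ℤ) : ZMod 2) = 0 := by push_cast; rw [h]; ring
  rw [ZMod.intCast_zmod_eq_zero_iff_dvd] at h2
  exact even_iff_two_dvd.2 (by exact_mod_cast h2)

private lemma sign_eq {a b : ℤ} (h : (a : ZMod 2) = (b : ZMod 2)) :
    ((a.negOnePow : ℤ)) = ((b.negOnePow : ℤ)) :=
  congrArg Units.val (negOnePow_eq_of_zmod2 h)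

private lemma even_decomp {a b : ℤ} (K T u : ℤ) (h : a - b = 2 * K + u * (u - 1) * T) :
    Even (a - b) := by
  rw [h]; exact (even_two_mul K).add ((Int.even_mul_pred_self u).mul_right T)

private lemma sign_eq_of_even {a b : ℤ} (h : Even (a - b)) :
    ((a.negOnePow : ℤ)) = ((b.negOnePow : ℤ)) :=
  congrArg Units.val ((Int.negOnePow_eq_iff _ _).2 h)

section aux

variable {K A : Type} [Field K] [Ring A] [Algebra K A]
  (𝒜 : ℤ → Submodule K A) [GradedRing 𝒜]

private lemma aux_vanish (S : Set A) (hS : ∀ a ∈ S, ∃ s, a ∈ 𝒜 s)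
    (hgen : Algebra.adjoin K S = ⊤)
    (L : A →ₗ[K] A) (h1 : L 1 = 0) (hg : ∀ a ∈ S, L a = 0)
    (hmul : ∀ (s : ℤ) (a b : A), a ∈ 𝒜 s → L a = 0 → L b = 0 → L (a * b) = 0) :
    ∀ a, L a = 0 := by
  have hM : ∀ w ∈ Submonoid.closure S, (∃ s, w ∈ 𝒜 s) ∧ L w = 0 := by
    intro w hw
    induction hw using Submonoid.closure_induction with
    | mem g hgS => exact ⟨hS g hgS, hg g hgS⟩
    | one => exact ⟨⟨0, SetLike.one_mem_graded 𝒜⟩, h1⟩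
    | mul u v hu hv ihu ihv =>
        obtain ⟨⟨s, hs⟩, hLu⟩ := ihu
        obtain ⟨⟨t, ht⟩, hLv⟩ := ihv
        exact ⟨⟨s + t, SetLike.mul_mem_graded hs ht⟩, hmul s u v hs hLu hLv⟩
  intro a
  have ha : a ∈ Submodule.span K ((Submonoid.closure S : Submonoid A) : Set A) := by
    have h0 : a ∈ Subalgebra.toSubmodule (Algebra.adjoin K S) := by
      rw [hgen]; exact trivial
    rwa [Algebra.adjoin_eq_span] at h0
  induction ha using Submodule.span_induction with
  | mem w hw => exact (hM w hw).2
  | zero => exact map_zero L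
  | add u v _ _ ihu ihv => rw [map_add, ihu, ihv, add_zero]
  | smul k u _ ihu => rw [map_smul, ihu, smul_zero]

private lemma aux_comm (S : Set A) (hS : ∀ a ∈ S, ∃ s, a ∈ 𝒜 s)
    (hgen : Algebra.adjoin K S = ⊤)
    (P Q : A →ₗ[K] A) (α β : ℤ)
    (hPd : ∀ (s : ℤ) (a : A), a ∈ 𝒜 s → P a ∈ 𝒜 (s + α))
    (hQd : ∀ (s : ℤ) (a : A), a ∈ 𝒜 s → Q a ∈ 𝒜 (s + β))
    (hPl : ∀ (s : ℤ) (a b : A), a ∈ 𝒜 s →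
        P (a * b) = P a * b + ((α * s).negOnePow : ℤ) • (a * P b))
    (hQl : ∀ (s : ℤ) (a b : A), a ∈ 𝒜 s →
        Q (a * b) = Q a * b + ((β * s).negOnePow : ℤ) • (a * Q b))
    (hgens : ∀ g ∈ S, P (Q g) = ((α * β).negOnePow : ℤ) • Q (P g)) :
    ∀ a, P (Q a) = ((α * β).negOnePow : ℤ) • Q (P a) := by
  have hP1 : P 1 = 0 := by simpa using hPl 0 1 1 (SetLike.one_mem_graded 𝒜)
  have hQ1 : Q 1 = 0 := by simpa using hQl 0 1 1 (SetLike.one_mem_graded 𝒜)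
  suffices h : ∀ a, (P ∘ₗ Q - (((α * β).negOnePow : ℤ) • (Q ∘ₗ P))) a = 0 by
    intro a
    have := h a
    simp only [LinearMap.sub_apply, LinearMap.smul_apply, LinearMap.comp_apply,
      sub_eq_zero] at this
    exact this
  apply aux_vanish 𝒜 S hS hgen
  · simp [hP1, hQ1]
  · intro g hgS
    simp only [LinearMap.sub_apply, LinearMap.smul_apply, LinearMap.comp_apply, hgens g hgS,
      sub_self]
  · intro s a b ha hva hvb
    simp only [LinearMap.sub_apply, LinearMap.smul_apply, LinearMap.comp_apply,
      sub_eq_zero] at hva hvb ⊢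
    rw [hQl s a b ha, map_add, map_zsmul, hPl (s + β) (Q a) b (hQd s a ha),
      hPl s a (Q b) ha, hvb, hPl s a b ha, map_add, map_zsmul,
      hQl (s + α) (P a) b (hPd s a ha), hQl s a (P b) ha, hva]
    simp only [mul_add, add_mul, Int.negOnePow_add, Units.val_mul, smul_add, smul_smul,
      smul_mul_assoc, mul_smul_comm]
    match_scalars
    all_goals simp only [mul_one, ← Units.val_mul, ← Int.negOnePow_add]
    all_goals
      apply sign_eq
      push_cast
      generalize (α : ZMod 2) = u
      generalize (β : ZMod 2) = v
      generalize (s : ZMod 2) = w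
      revert u v w
      decide

end aux

/-- **`d ∘ d = 0` for the Darboux-form differential defined by a Hamiltonian
satisfying the classical master equation.**

Let `K` be a field of characteristic zero and `A` a graded-commutative algebra over
`K` (a `ℤ`-graded `K`-algebra, concentrated in degrees `≤ 0`, with
`ab = (−1)^{|a||b|} ba`), freely generated over the smooth base `R = K[x⁰₁,…,x⁰ₘ]` by
generators `x^{-i}_j` in degree `−i` for `i = 1,…,d` and `y^{i-2d-1}_j` in degree
`i − 2d − 1` for `i = 0,…,d`.  Here the generators are encoded as families
`x p, y p` for `p = (i, j)` with `i : Fin (d+1)`, `j : Fin (m i)`, with `x (0, j)`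
the degree-`0` polynomial generators; freeness is encoded by the data of the partial
derivative operators `Px p = ∂/∂x_p` and `Py p = ∂/∂y_p` (graded derivations of the
appropriate degrees, dual to the generators), together with generation of `A` by the
generators.

Suppose `H ∈ A^{-2d}` satisfies the classical master equation
`Σ_{i=1}^{d} Σ_j (∂H/∂x^{-i}_j)(∂H/∂y^{i-2d-1}_j) = 0` in `A^{1-2d}`.
Define a degree-`+1` derivation `D` on `A` by `D = 0` on `R` (i.e. on the degree-`0`
generators) and `D x^{-i}_j = ∂H/∂y^{i-2d-1}_j`, `D y^{i-2d-1}_j = ∂H/∂x^{-i}_j`.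
Then `D ∘ D = 0`, so `(A, D)` is a commutative differential graded algebra. -/
theorem darboux_differential_squares_to_zero
    (K : Type) [Field K] [CharZero K] (A : Type) [Ring A] [Algebra K A]
    (𝒜 : ℤ → Submodule K A) [GradedRing 𝒜]
    (d : ℕ) (m : Fin (d + 1) → ℕ)
    (x y : (Σ i : Fin (d + 1), Fin (m i)) → A)
    -- degrees of the generators
    (hxdeg : ∀ p, x p ∈ 𝒜 (-(p.1 : ℤ)))
    (hydeg : ∀ p, y p ∈ 𝒜 ((p.1 : ℤ) - (2 * d + 1)))
    -- `A` is concentrated in degrees `≤ 0`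
    (hneg : ∀ n : ℤ, 0 < n → ∀ a ∈ 𝒜 n, a = 0)
    -- graded commutativity
    (hcomm : ∀ (s t : ℤ) (a b : A), a ∈ 𝒜 s → b ∈ 𝒜 t →
        a * b = ((s * t).negOnePow : ℤ) • (b * a))
    -- `A` is generated over `K` by the generators
    (hgen : Algebra.adjoin K (Set.range x ∪ Set.range y) = ⊤)
    -- the differential: a `K`-linear degree `+1` graded derivation
    (D : A →ₗ[K] A)
    (hDdeg : ∀ (s : ℤ) (a : A), a ∈ 𝒜 s → D a ∈ 𝒜 (s + 1))
    (hDleib : ∀ (s : ℤ) (a b : A), a ∈ 𝒜 s →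
        D (a * b) = D a * b + (s.negOnePow : ℤ) • (a * D b))
    -- the partial derivatives: `K`-linear graded derivations dual to the generators
    (Px Py : (Σ i : Fin (d + 1), Fin (m i)) → (A →ₗ[K] A))
    (hPxdeg : ∀ p (s : ℤ) (a : A), a ∈ 𝒜 s → Px p a ∈ 𝒜 (s + (p.1 : ℤ)))
    (hPydeg : ∀ p (s : ℤ) (a : A), a ∈ 𝒜 s → Py p a ∈ 𝒜 (s + (2 * d + 1) - (p.1 : ℤ)))
    (hPxleib : ∀ p (s : ℤ) (a b : A), a ∈ 𝒜 s →
        Px p (a * b) = Px p a * b + (((p.1 : ℤ) * s).negOnePow : ℤ) • (a * Px p b))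
    (hPyleib : ∀ p (s : ℤ) (a b : A), a ∈ 𝒜 s →
        Py p (a * b)
          = Py p a * b + ((((2 * d + 1 : ℤ) - (p.1 : ℤ)) * s).negOnePow : ℤ) • (a * Py p b))
    (hPxx : ∀ p q, Px p (x q) = if p = q then 1 else 0)
    (hPxy : ∀ p q, Px p (y q) = 0)
    (hPyy : ∀ p q, Py p (y q) = if p = q then 1 else 0)
    (hPyx : ∀ p q, Py p (x q) = 0)
    -- the Hamiltonian, of degree `-2d`, satisfying the classical master equation
    (H : A) (hH : H ∈ 𝒜 (-(2 * (d : ℤ))))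
    (hmaster :
      ∑ p ∈ Finset.univ.filter (fun p : (Σ i : Fin (d + 1), Fin (m i)) => p.1 ≠ 0),
        Px p H * Py p H = 0)
    -- the values of `D` on the generators: `D = 0` on `R`, `D x = ∂H/∂y`, `D y = ∂H/∂x`
    (hDx : ∀ p, D (x p) = if p.1 = 0 then 0 else Py p H)
    (hDy : ∀ p, D (y p) = Px p H) :
    ∀ a : A, D (D a) = 0 := by
  classical
  have hS : ∀ a ∈ (Set.range x ∪ Set.range y), ∃ s, a ∈ 𝒜 s := by
    rintro a (⟨r, rfl⟩ | ⟨r, rfl⟩)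
    · exact ⟨_, hxdeg r⟩
    · exact ⟨_, hydeg r⟩
  have hPx1 : ∀ q, Px q 1 = 0 := fun q => by
    simpa using hPxleib q 0 1 1 (SetLike.one_mem_graded 𝒜)
  have hPy1 : ∀ q, Py q 1 = 0 := fun q => by
    simpa using hPyleib q 0 1 1 (SetLike.one_mem_graded 𝒜)
  have hD1 : D 1 = 0 := by simpa using hDleib 0 1 1 (SetLike.one_mem_graded 𝒜)
  have hfq : ∀ q, Px q H ∈ 𝒜 (-(2 * (d : ℤ)) + (q.1 : ℤ)) := fun q => hPxdeg q _ H hH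
  have hgq : ∀ q, Py q H ∈ 𝒜 (1 - (q.1 : ℤ)) := by
    intro q
    have h := hPydeg q _ H hH
    have e : -(2 * (d : ℤ)) + (2 * d + 1) - (q.1 : ℤ) = 1 - (q.1 : ℤ) := by ring
    rwa [e] at h
  have hg0 : ∀ q : (Σ i : Fin (d + 1), Fin (m i)), q.1 = 0 → Py q H = 0 := by
    intro q hq
    have h := hgq q
    rw [hq] at h
    simp only [Fin.val_zero, Nat.cast_zero, sub_zero] at h
    exact hneg 1 one_pos _ h
  have hmaster' : ∑ q : (Σ i : Fin (d + 1), Fin (m i)), Px q H * Py q H = 0 := by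
    rw [← hmaster, Finset.sum_filter]
    refine Finset.sum_congr rfl fun q _ => ?_
    by_cases h : q.1 = 0
    · rw [if_neg (fun hn => hn h), hg0 q h, mul_zero]
    · rw [if_pos h]
  have hDx' : ∀ q, D (x q) = Py q H := by
    intro q
    rw [hDx q]
    by_cases h : q.1 = 0
    · rw [if_pos h, hg0 q h]
    · rw [if_neg h]
  have hPydeg' : ∀ p (s : ℤ) (a : A), a ∈ 𝒜 s →
      Py p a ∈ 𝒜 (s + ((2 * (d : ℤ) + 1) - (p.1 : ℤ))) := by
    intro p s a ha
    have h := hPydeg p s a ha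
    rwa [add_sub_assoc] at h
  -- graded commutators of the partial derivatives
  have hC1 : ∀ q p (a : A), Px q (Px p a)
      = (((q.1 : ℤ) * (p.1 : ℤ)).negOnePow : ℤ) • Px p (Px q a) := by
    intro q p
    refine aux_comm 𝒜 _ hS hgen (Px q) (Px p) (q.1 : ℤ) (p.1 : ℤ)
      (hPxdeg q) (hPxdeg p) (hPxleib q) (hPxleib p) ?_
    rintro g (⟨r, rfl⟩ | ⟨r, rfl⟩)
    · simp [hPxx, apply_ite (Px q), apply_ite (Px p), hPx1]
    · simp [hPxy]
  have hC2 : ∀ q p (a : A), Py q (Px p a)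
      = ((((2 * (d : ℤ) + 1) - (q.1 : ℤ)) * (p.1 : ℤ)).negOnePow : ℤ) • Px p (Py q a) := by
    intro q p
    refine aux_comm 𝒜 _ hS hgen (Py q) (Px p) ((2 * (d : ℤ) + 1) - (q.1 : ℤ)) (p.1 : ℤ)
      (hPydeg' q) (hPxdeg p) (hPyleib q) (hPxleib p) ?_
    rintro g (⟨r, rfl⟩ | ⟨r, rfl⟩)
    · simp [hPxx, hPyx, apply_ite (Py q), hPy1]
    · simp [hPxy, hPyy, apply_ite (Px p), hPx1]
  have hC3 : ∀ q p (a : A), Px q (Py p a)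
      = (((q.1 : ℤ) * ((2 * (d : ℤ) + 1) - (p.1 : ℤ))).negOnePow : ℤ) • Py p (Px q a) := by
    intro q p
    refine aux_comm 𝒜 _ hS hgen (Px q) (Py p) (q.1 : ℤ) ((2 * (d : ℤ) + 1) - (p.1 : ℤ))
      (hPxdeg q) (hPydeg' p) (hPxleib q) (hPyleib p) ?_
    rintro g (⟨r, rfl⟩ | ⟨r, rfl⟩)
    · simp [hPxx, hPyx, apply_ite (Py p), hPy1]
    · simp [hPxy, hPyy, apply_ite (Px q), hPx1]
  have hC4 : ∀ q p (a : A), Py q (Py p a)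
      = ((((2 * (d : ℤ) + 1) - (q.1 : ℤ)) * ((2 * (d : ℤ) + 1) - (p.1 : ℤ))).negOnePow : ℤ)
        • Py p (Py q a) := by
    intro q p
    refine aux_comm 𝒜 _ hS hgen (Py q) (Py p) ((2 * (d : ℤ) + 1) - (q.1 : ℤ))
      ((2 * (d : ℤ) + 1) - (p.1 : ℤ))
      (hPydeg' q) (hPydeg' p) (hPyleib q) (hPyleib p) ?_
    rintro g (⟨r, rfl⟩ | ⟨r, rfl⟩)
    · simp [hPyx]
    · simp [hPyy, apply_ite (Py q), apply_ite (Py p), hPy1]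
  have swap : ∀ (t u : ℤ) (a b c : A), a ∈ 𝒜 t → b ∈ 𝒜 u →
      a * (b * c) = ((t * u).negOnePow : ℤ) • (b * (a * c)) := by
    intro t u a b c ha hb
    rw [← mul_assoc, hcomm t u a b ha hb, smul_mul_assoc, mul_assoc]
  set E : A →ₗ[K] A :=
    ∑ q : (Σ i : Fin (d + 1), Fin (m i)),
      ((LinearMap.mulLeft K (Py q H)) ∘ₗ Px q + (LinearMap.mulLeft K (Px q H)) ∘ₗ Py q)
    with hEdef
  have hEapp : ∀ v, E v = ∑ q : (Σ i : Fin (d + 1), Fin (m i)),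
      (Py q H * Px q v + Px q H * Py q v) := by
    intro v
    rw [hEdef]
    simp [LinearMap.sum_apply]
  have hDE : ∀ v, D v = E v := by
    suffices h : ∀ v, (D - E) v = 0 by
      intro v
      have := h v
      rwa [LinearMap.sub_apply, sub_eq_zero] at this
    apply aux_vanish 𝒜 _ hS hgen
    · rw [LinearMap.sub_apply, sub_eq_zero, hD1, hEapp]
      simp [hPx1, hPy1]
    · rintro g (⟨r, rfl⟩ | ⟨r, rfl⟩)
      · rw [LinearMap.sub_apply, sub_eq_zero, hDx' r, hEapp]
        simp [hPxx, hPyx]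
      · rw [LinearMap.sub_apply, sub_eq_zero, hDy r, hEapp]
        simp [hPxy, hPyy]
    · intro s a b ha hva hvb
      rw [LinearMap.sub_apply, sub_eq_zero] at hva hvb ⊢
      have key : ∀ q : (Σ i : Fin (d + 1), Fin (m i)),
          Py q H * Px q (a * b) + Px q H * Py q (a * b)
          = (Py q H * Px q a + Px q H * Py q a) * b
            + ((s.negOnePow : ℤ)) • (a * (Py q H * Px q b + Px q H * Py q b)) := by
        intro q
        rw [hPxleib q s a b ha, hPyleib q s a b ha]
        simp only [mul_add, add_mul, mul_smul_comm, smul_add, smul_smul, mul_assoc]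
        rw [swap (1 - (q.1 : ℤ)) s (Py q H) a (Px q b) (hgq q) ha,
          swap (-(2 * (d : ℤ)) + (q.1 : ℤ)) s (Px q H) a (Py q b) (hfq q) ha]
        simp only [smul_smul]
        match_scalars
        all_goals simp only [mul_one, ← Units.val_mul, ← Int.negOnePow_add]
        all_goals (apply sign_eq; push_cast; ring)
      have hsum : ∑ q : (Σ i : Fin (d + 1), Fin (m i)),
            ((Py q H * Px q a + Px q H * Py q a) * b
              + ((s.negOnePow : ℤ)) • (a * (Py q H * Px q b + Px q H * Py q b)))
          = (∑ q : (Σ i : Fin (d + 1), Fin (m i)), (Py q H * Px q a + Px q H * Py q a)) * b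
            + ((s.negOnePow : ℤ)) • (a * ∑ q : (Σ i : Fin (d + 1), Fin (m i)),
                (Py q H * Px q b + Px q H * Py q b)) := by
        rw [Finset.sum_add_distrib, ← Finset.sum_mul, ← Finset.smul_sum, ← Finset.mul_sum]
      rw [hDleib s a b ha, hva, hvb, hEapp a, hEapp b, hEapp (a * b),
        Finset.sum_congr rfl fun q (_ : q ∈ Finset.univ) => key q, hsum]
  -- `D` kills `∂H/∂x_p`
  have hDf : ∀ p, D (Px p H) = 0 := by
    intro p
    have mX : ∑ q : (Σ i : Fin (d + 1), Fin (m i)),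
        (Px p (Px q H) * Py q H
          + (((p.1 : ℤ) * (-(2 * (d : ℤ)) + (q.1 : ℤ))).negOnePow : ℤ)
            • (Px q H * Px p (Py q H))) = 0 := by
      have h0 : Px p (∑ q : (Σ i : Fin (d + 1), Fin (m i)), Px q H * Py q H) = 0 := by
        rw [hmaster', map_zero]
      rw [map_sum] at h0
      rw [← h0]
      exact Finset.sum_congr rfl fun q _ => (hPxleib p _ (Px q H) (Py q H) (hfq q)).symm
    have key : ∀ q : (Σ i : Fin (d + 1), Fin (m i)),
        Py q H * Px q (Px p H) + Px q H * Py q (Px p H)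
        = (((p.1 : ℤ)).negOnePow : ℤ) • (Px p (Px q H) * Py q H
            + (((p.1 : ℤ) * (-(2 * (d : ℤ)) + (q.1 : ℤ))).negOnePow : ℤ)
              • (Px q H * Px p (Py q H))) := by
      intro q
      rw [hC1 q p H, hC2 q p H, mul_smul_comm, mul_smul_comm,
        hcomm (1 - (q.1 : ℤ)) ((-(2 * (d : ℤ)) + (q.1 : ℤ)) + (p.1 : ℤ)) (Py q H)
          (Px p (Px q H)) (hgq q) (hPxdeg p _ (Px q H) (hfq q))]
      simp only [smul_add, smul_smul]
      match_scalars
      all_goals simp only [mul_one, ← Units.val_mul, ← Int.negOnePow_add]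
      · apply sign_eq_of_even
        exact even_decomp ((d : ℤ) * (q.1 : ℤ) - (d : ℤ)) (-1) (q.1 : ℤ) (by ring)
      · apply sign_eq_of_even
        exact even_decomp (2 * (d : ℤ) * (p.1 : ℤ) - (q.1 : ℤ) * (p.1 : ℤ)) 0 0 (by ring)
    rw [hDE (Px p H), hEapp,
      Finset.sum_congr rfl fun q (_ : q ∈ Finset.univ) => key q,
      ← Finset.smul_sum, mX, smul_zero]
  -- `D` kills `∂H/∂y_p`
  have hDg : ∀ p, D (Py p H) = 0 := by
    intro p
    have mY : ∑ q : (Σ i : Fin (d + 1), Fin (m i)),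
        (Py p (Px q H) * Py q H
          + ((((2 * (d : ℤ) + 1) - (p.1 : ℤ)) * (-(2 * (d : ℤ)) + (q.1 : ℤ))).negOnePow : ℤ)
            • (Px q H * Py p (Py q H))) = 0 := by
      have h0 : Py p (∑ q : (Σ i : Fin (d + 1), Fin (m i)), Px q H * Py q H) = 0 := by
        rw [hmaster', map_zero]
      rw [map_sum] at h0
      rw [← h0]
      exact Finset.sum_congr rfl fun q _ => (hPyleib p _ (Px q H) (Py q H) (hfq q)).symm
    have key : ∀ q : (Σ i : Fin (d + 1), Fin (m i)),
        Py q H * Px q (Py p H) + Px q H * Py q (Py p H)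
        = ((((2 * (d : ℤ) + 1) - (p.1 : ℤ)).negOnePow : ℤ)) • (Py p (Px q H) * Py q H
            + ((((2 * (d : ℤ) + 1) - (p.1 : ℤ)) * (-(2 * (d : ℤ)) + (q.1 : ℤ))).negOnePow : ℤ)
              • (Px q H * Py p (Py q H))) := by
      intro q
      rw [hC3 q p H, hC4 q p H, mul_smul_comm, mul_smul_comm,
        hcomm (1 - (q.1 : ℤ)) ((-(2 * (d : ℤ)) + (q.1 : ℤ)) + ((2 * (d : ℤ) + 1) - (p.1 : ℤ)))
          (Py q H) (Py p (Px q H)) (hgq q) (hPydeg' p _ (Px q H) (hfq q))]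
      simp only [smul_add, smul_smul]
      match_scalars
      all_goals simp only [mul_one, ← Units.val_mul, ← Int.negOnePow_add]
      · apply sign_eq_of_even
        exact even_decomp ((d : ℤ) * (q.1 : ℤ) - (d : ℤ)) (-1) (q.1 : ℤ) (by ring)
      · apply sign_eq_of_even
        exact even_decomp (4 * (d : ℤ) * (d : ℤ) + 2 * (d : ℤ) - 2 * (d : ℤ) * (p.1 : ℤ)
            - 2 * (d : ℤ) * (q.1 : ℤ) - (q.1 : ℤ) + (q.1 : ℤ) * (p.1 : ℤ)) 0 0 (by ring)
    rw [hDE (Py p H), hEapp,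
      Finset.sum_congr rfl fun q (_ : q ∈ Finset.univ) => key q,
      ← Finset.smul_sum, mY, smul_zero]
  -- conclusion by induction
  intro a
  suffices h : ∀ v, (D ∘ₗ D) v = 0 by simpa using h a
  apply aux_vanish 𝒜 _ hS hgen
  · simp [hD1]
  · rintro g (⟨r, rfl⟩ | ⟨r, rfl⟩)
    · rw [LinearMap.comp_apply, hDx' r, hDg r]
    · rw [LinearMap.comp_apply, hDy r, hDf r]
  · intro s a b ha hva hvb
    rw [LinearMap.comp_apply] at hva hvb ⊢
    rw [hDleib s a b ha, map_add, map_zsmul, hDleib (s + 1) (D a) b (hDdeg s a ha),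
      hDleib s a (D b) ha, hva, hvb]
    simp [Int.negOnePow_succ]
end
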